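/- For every connected graph G with n vertices and m edges, 2·W(G) ≤ (n−1)·ε(G) − ξ^c(G) + 2m, with equality if and only if the diameter of G is at most 2. -/

import Mathlib

open Finset

set_option linter.unusedSectionVars false

/-- The Wiener index: sum of distances over unordered pairs of vertices. -/
noncomputable def wiener {V : Type*} [Fintype V] (G : SimpleGraph V) : ℕ :=
  (∑ u : V, ∑ v : V, G.dist u v) / 2

/-- The eccentricity of a vertex. -/
noncomputable def eccVert {V : Type*} [Fintype V] (G : SimpleGraph V) (v : V) : ℕ :=
  univ.sup (G.dist v)

/-- The eccentricity (total eccentricity) of a graph. -/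
noncomputable def eccSum {V : Type*} [Fintype V] (G : SimpleGraph V) : ℕ :=
  ∑ v : V, eccVert G v

/-- The eccentric connectivity of a graph. -/
noncomputable def eccConn {V : Type*} [Fintype V] (G : SimpleGraph V)
    [DecidableRel G.Adj] : ℕ :=
  ∑ v : V, G.degree v * eccVert G v

/-- The diameter of a graph: the maximum eccentricity. -/
noncomputable def graphDiam {V : Type*} [Fintype V] (G : SimpleGraph V) : ℕ :=
  univ.sup (eccVert G)

section Aux

variable {V : Type*} [Fintype V] [DecidableEq V] {G : SimpleGraph V}

lemma dist_le_eccVert (u v : V) : G.dist u v ≤ eccVert G u :=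
  Finset.le_sup (mem_univ v)

lemma exists_adj_dist (hG : G.Connected) {u v : V} {k : ℕ} (h : G.dist u v = k + 1) :
    ∃ w, G.Adj u w ∧ G.dist w v = k := by
  obtain ⟨p, hp⟩ := (hG u v).exists_walk_length_eq_dist
  cases p with
  | nil => rw [h] at hp; simp at hp
  | @cons _ w _ hadj q =>
    refine ⟨w, hadj, ?_⟩
    have h1 : G.dist w v ≤ q.length := SimpleGraph.dist_le q
    have h2 : G.dist u w = 1 := SimpleGraph.dist_eq_one_iff_adj.mpr hadj
    have h3 : G.dist u v ≤ G.dist u w + G.dist w v := hG.dist_triangle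
    simp only [SimpleGraph.Walk.length_cons, h] at hp
    omega

/-- The double sum of distances is even. -/
lemma two_dvd_sum_dist (G : SimpleGraph V) : 2 ∣ ∑ u : V, ∑ v : V, G.dist u v := by
  rw [← ZMod.natCast_eq_zero_iff]
  push_cast
  rw [← Finset.sum_product']
  refine Finset.sum_ninvolution Prod.swap (fun p => ?_) (fun p hf hswap => ?_)
    (fun p => mem_univ _) (fun p => Prod.swap_swap p)
  · show ((G.dist p.1 p.2 : ZMod 2)) + ((G.dist p.2 p.1 : ZMod 2)) = 0
    rw [SimpleGraph.dist_comm]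
    exact CharTwo.add_self_eq_zero _
  · apply hf
    have h12 : p.2 = p.1 := congrArg Prod.fst hswap
    show ((G.dist p.1 p.2 : ZMod 2)) = 0
    rw [h12, SimpleGraph.dist_self]
    simp

end Aux

theorem stmt_5 {V : Type*} [Fintype V] [DecidableEq V] (G : SimpleGraph V)
    [DecidableRel G.Adj] (hG : G.Connected) :
    (2 * wiener G : ℤ) ≤
        (Fintype.card V - 1) * eccSum G - eccConn G + 2 * G.edgeFinset.card ∧
      ((2 * wiener G : ℤ) =
          (Fintype.card V - 1) * eccSum G - eccConn G + 2 * G.edgeFinset.card ↔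
        graphDiam G ≤ 2) := by
  classical
  haveI : Nonempty V := hG.nonempty
  set n := Fintype.card V with hn
  set R : V → Finset V := fun u => univ \ insert u (G.neighborFinset u) with hRdef
  have hRmem : ∀ u v : V, v ∈ R u ↔ v ≠ u ∧ ¬ G.Adj u v := by
    intro u v
    simp [hRdef, SimpleGraph.mem_neighborFinset, not_or]
  have hcardR : ∀ u : V, (R u).card = n - 1 - G.degree u := by
    intro u
    have h1 : (insert u (G.neighborFinset u)).card = G.degree u + 1 := by
      rw [card_insert_of_notMem (G.notMem_neighborFinset_self u),
        SimpleGraph.card_neighborFinset_eq_degree]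
    rw [hRdef]
    simp only [card_sdiff_of_subset (subset_univ _), card_univ, h1, ← hn]
    omega
  have hdeg : ∀ u : V, G.degree u + 1 ≤ n := fun u => G.degree_lt_card_verts u
  -- split the sum of distances from u
  have hsplit : ∀ u : V, ∑ v, G.dist u v = G.degree u + ∑ v ∈ R u, G.dist u v := by
    intro u
    have hN : ∑ v ∈ G.neighborFinset u, G.dist u v = G.degree u := by
      rw [← SimpleGraph.card_neighborFinset_eq_degree, card_eq_sum_ones]
      exact sum_congr rfl fun v hv =>
        SimpleGraph.dist_eq_one_iff_adj.mpr (by simpa using hv)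
    have := Finset.sum_sdiff (f := G.dist u) (subset_univ (insert u (G.neighborFinset u)))
    rw [Finset.sum_insert (G.notMem_neighborFinset_self u), hN, SimpleGraph.dist_self] at this
    rw [← this]
    simp only [hRdef]
    omega
  have hle : ∀ u ∈ (univ : Finset V),
      ∑ v, G.dist u v ≤ G.degree u + ∑ _v ∈ R u, eccVert G u := by
    intro u _
    rw [hsplit u]
    exact add_le_add_right (sum_le_sum fun v _ => dist_le_eccVert u v) _
  -- the equality conditions
  have hEqIff : ∀ u : V,
      (∑ v, G.dist u v = G.degree u + ∑ _v ∈ R u, eccVert G u) ↔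
        ∀ v ∈ R u, G.dist u v = eccVert G u := by
    intro u
    rw [hsplit u, Nat.add_left_cancel_iff]
    exact Finset.sum_eq_sum_iff_of_le (fun v _ => dist_le_eccVert u v)
  -- P ↔ diameter ≤ 2
  have hPdiam : (∀ u : V, ∀ v ∈ R u, G.dist u v = eccVert G u) ↔ graphDiam G ≤ 2 := by
    constructor
    · intro hP
      by_contra hd
      rw [graphDiam, Finset.sup_le_iff] at hd
      push_neg at hd
      obtain ⟨u, -, hu⟩ := hd
      obtain ⟨v, -, hv⟩ := Finset.exists_mem_eq_sup univ univ_nonempty (G.dist u)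
      have hv : G.dist u v = eccVert G u := hv.symm
      have h3 : 3 ≤ eccVert G u := hu
      obtain ⟨w1, ha1, hd1⟩ := exists_adj_dist hG
        (show G.dist u v = (eccVert G u - 2 + 1) + 1 by omega)
      obtain ⟨w2, ha2, hd2⟩ := exists_adj_dist hG
        (show G.dist w1 v = (eccVert G u - 2) + 1 by omega)
      have hduw2 : G.dist u w2 ≤ 2 := by
        have := hG.dist_triangle (u := u) (v := w1) (w := w2)
        have e1 : G.dist u w1 = 1 := SimpleGraph.dist_eq_one_iff_adj.mpr ha1
        have e2 : G.dist w1 w2 = 1 := SimpleGraph.dist_eq_one_iff_adj.mpr ha2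
        omega
      have hw2u : w2 ≠ u := by
        rintro rfl
        omega
      have hnadj : ¬ G.Adj u w2 := by
        intro hadj
        have e1 : G.dist u w2 = 1 := SimpleGraph.dist_eq_one_iff_adj.mpr hadj
        have := hG.dist_triangle (u := u) (v := w2) (w := v)
        omega
      have := hP u w2 ((hRmem u w2).mpr ⟨hw2u, hnadj⟩)
      omega
    · intro hd u v hv
      obtain ⟨hvu, hna⟩ := (hRmem u v).mp hv
      have h1 : 0 < G.dist u v := hG.pos_dist_of_ne hvu.symm
      have h2 : G.dist u v ≠ 1 := fun h => hna (SimpleGraph.dist_eq_one_iff_adj.mp h)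
      have h3 : G.dist u v ≤ eccVert G u := dist_le_eccVert u v
      have h4 : eccVert G u ≤ 2 := le_trans (Finset.le_sup (mem_univ u)) hd
      omega
  -- 2 * wiener = the double sum
  set S : ℕ := ∑ u : V, ∑ v : V, G.dist u v with hS
  have h2w : (2 * wiener G : ℕ) = S := by
    rw [wiener, ← hS]
    exact Nat.mul_div_cancel' (two_dvd_sum_dist G)
  -- the right hand side
  have hRHS : ((∑ u : V, (G.degree u + ∑ _v ∈ R u, eccVert G u) : ℕ) : ℤ) =
      ((n : ℤ) - 1) * eccSum G - eccConn G + 2 * G.edgeFinset.card := by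
    have h2 : ∑ u : V, ((G.degree u : ℤ)) = 2 * G.edgeFinset.card := by
      exact_mod_cast congrArg (Nat.cast : ℕ → ℤ) G.sum_degrees_eq_twice_card_edges
    calc ((∑ u : V, (G.degree u + ∑ _v ∈ R u, eccVert G u) : ℕ) : ℤ)
        = ∑ u : V, ((G.degree u : ℤ) +
            (((n : ℤ) - 1) * eccVert G u - (G.degree u : ℤ) * eccVert G u)) := by
          rw [Nat.cast_sum]
          refine sum_congr rfl fun u _ => ?_
          rw [Finset.sum_const, smul_eq_mul, hcardR u, Nat.cast_add, Nat.cast_mul]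
          have hd := hdeg u
          have hc : ((n - 1 - G.degree u : ℕ) : ℤ) = (n : ℤ) - 1 - G.degree u := by omega
          rw [hc]; ring
      _ = ∑ u : V, (G.degree u : ℤ) +
            (((n : ℤ) - 1) * ∑ u : V, (eccVert G u : ℤ) -
              ∑ u : V, (G.degree u : ℤ) * eccVert G u) := by
          rw [sum_add_distrib, sum_sub_distrib, mul_sum]
      _ = _ := by rw [h2, eccSum, eccConn]; push_cast; ring
  have hSle : S ≤ ∑ u : V, (G.degree u + ∑ _v ∈ R u, eccVert G u) := sum_le_sum hle
  constructor
  · calc (2 * wiener G : ℤ) = (S : ℤ) := by exact_mod_cast h2w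
      _ ≤ ((∑ u : V, (G.degree u + ∑ _v ∈ R u, eccVert G u) : ℕ) : ℤ) := by exact_mod_cast hSle
      _ = _ := hRHS
  · rw [show (2 * wiener G : ℤ) = (S : ℤ) by exact_mod_cast h2w, ← hRHS]
    rw [Nat.cast_inj]
    rw [Finset.sum_eq_sum_iff_of_le hle]
    rw [← hPdiam]
    constructor
    · intro h u; exact (hEqIff u).mp (h u (mem_univ u))
    · intro h u _; exact (hEqIff u).mpr (h u)
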